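/- Let $G$ be a connected graph on $n$ vertices. If the ideal $P_0 = (t, x_1t,\dots,x_nt)$ of $R_G$ is not a minimal prime of the principal ideal $(t)$, then $G$ is bipartite. -/

import Mathlib

open MvPolynomial

set_option synthInstance.maxHeartbeats 1000000
set_option maxHeartbeats 1000000
set_option linter.unusedSectionVars false

noncomputable section

/-- The ambient polynomial ring `K[x_i : i ∈ V][t]`, with the variable `none` playing
the role of `t`. -/
abbrev Amb (K V : Type*) [CommSemiring K] := MvPolynomial (Option V) K

variable (K : Type*) [Field K] {V : Type*} [DecidableEq V]

/-- The generator `t`. -/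
def tGen : Amb K V := X none

/-- The generator `x_i t`. -/
def vGen (i : V) : Amb K V := X (some i) * X none

/-- The generator `x_i x_j t`. -/
def eGen (i j : V) : Amb K V := X (some i) * X (some j) * X none

variable (G : SimpleGraph V)

/-- The toric ring `R_G = K[t, {x_i t}, {x_i x_j t : {i,j} ∈ E(G)}]` of the graph `G`. -/
def RG : Subalgebra K (Amb K V) :=
  Algebra.adjoin K
    ({tGen K} ∪ Set.range (vGen K (V := V)) ∪ {p | ∃ i j, G.Adj i j ∧ p = eGen K i j})

/-- The faces of the one-dimensional simplicial complex attached to `G`. -/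
def IsFace (F : Finset V) : Prop :=
  F = ∅ ∨ (∃ i, F = {i}) ∨ ∃ i j, G.Adj i j ∧ F = {i, j}

/-- The monomial `x_F t`. -/
def faceMon (F : Finset V) : Amb K V := (∏ i ∈ F, X (some i)) * X none

/-- The ideal `P_0 = (t, x_1 t, …, x_n t)` of `R_G`. -/
def P0 : Ideal (RG K G) :=
  Ideal.span {u : RG K G | ((u : Amb K V) = tGen K) ∨ ∃ i, (u : Amb K V) = vGen K i}

/-- The principal ideal `(t)` of `R_G`. -/
def tIdeal : Ideal (RG K G) := Ideal.span {u : RG K G | (u : Amb K V) = tGen K}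

/-- The ideal `P_C` generated by the monomials `x_F t` for faces `F ⊆ C`. -/
def PC (C : Finset V) : Ideal (RG K G) :=
  Ideal.span {u : RG K G | ∃ F : Finset V, IsFace G F ∧ F ⊆ C ∧ (u : Amb K V) = faceMon K F}

/-- The ideal `Q_i` generated by the monomials `x_F t` for faces `F ∋ i`. -/
def Qi (i : V) : Ideal (RG K G) :=
  Ideal.span {u : RG K G | ∃ F : Finset V, IsFace G F ∧ i ∈ F ∧ (u : Amb K V) = faceMon K F}

/-- A vertex cover of `G`. -/
def IsVertexCover (C : Finset V) : Prop := ∀ ⦃i j⦄, G.Adj i j → i ∈ C ∨ j ∈ C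

/-- A minimal vertex cover of `G`. -/
def IsMinVertexCover (C : Finset V) : Prop :=
  IsVertexCover G C ∧ ∀ C' ⊆ C, IsVertexCover G C' → C' = C

/-- An induced odd cycle of `G`, given by an injective cyclic enumeration of its
vertices such that adjacency holds exactly between consecutive vertices. -/
def IsInducedOddCycle {V : Type*} (G : SimpleGraph V) (m : ℕ) (c : ZMod m → V) : Prop :=
  3 ≤ m ∧ Odd m ∧ Function.Injective c ∧
    ∀ p q : ZMod m, G.Adj (c p) (c q) ↔ (q = p + 1 ∨ p = q + 1)

/-- The monomial `x^a t^b` of the ambient ring. -/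
def monom [Fintype V] (a : V → ℕ) (b : ℕ) : Amb K V :=
  (∏ i, X (some i) ^ a i) * X none ^ b

/-- An element of `R_G` which is a monomial. -/
def IsMonomialElt [Fintype V] (u : RG K G) : Prop :=
  ∃ (a : V → ℕ) (b : ℕ), (u : Amb K V) = monom K a b

/-- A monomial ideal of `R_G`. -/
def IsMonomialIdeal [Fintype V] (I : Ideal (RG K G)) : Prop :=
  ∃ S : Set (RG K G), (∀ u ∈ S, IsMonomialElt K G u) ∧ I = Ideal.span S

/-- A height one ideal of the domain `R_G`: a nonzero prime all of whose properly
contained primes are zero. -/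
def HeightOne (I : Ideal (RG K G)) : Prop :=
  I.IsPrime ∧ I ≠ ⊥ ∧ ∀ J : Ideal (RG K G), J.IsPrime → J < I → J = ⊥

/-- The ideal contains the element `t`. -/
def ContainsT (I : Ideal (RG K G)) : Prop := ∃ u ∈ I, (u : Amb K V) = tGen K

/-- The canonical ideal of `R_G` (for `R_G` normal): the intersection of all height one
monomial prime ideals. -/
def canonicalIdeal [Fintype V] : Ideal (RG K G) :=
  sInf {P : Ideal (RG K G) | HeightOne K G P ∧ IsMonomialIdeal K G P}

/-- `R_G` is Gorenstein: the canonical ideal (= canonical module) is isomorphic to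
`R_G` as an `R_G`-module, equivalently it is a principal ideal, i.e. the canonical
class vanishes. -/
def IsGorensteinToric [Fintype V] : Prop :=
  (canonicalIdeal K G).IsPrincipal


/-! ### Auxiliary machinery -/

/-- The weight function: `t` (the variable `none`) has weight `2`, each `x_i` has weight `-1`. -/
def wV (V : Type*) : Option V → ℤ := fun s => match s with
  | none => 2
  | some _ => -1

section Aux

variable {K G}

lemma isWH_tGen : (tGen K (V := V)).IsWeightedHomogeneous (wV V) 2 :=
  isWeightedHomogeneous_X K (wV V) (none : Option V)

lemma isWH_vGen (i : V) : (vGen K i).IsWeightedHomogeneous (wV V) 1 := by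
  have h := (isWeightedHomogeneous_X K (wV V) (some i)).mul
    (isWeightedHomogeneous_X K (wV V) (none : Option V))
  have h2 : wV V (some i) + wV V none = 1 := by simp [wV]
  rwa [h2] at h

lemma isWH_eGen (i j : V) : (eGen K i j).IsWeightedHomogeneous (wV V) 0 := by
  have h := ((isWeightedHomogeneous_X K (wV V) (some i)).mul
    (isWeightedHomogeneous_X K (wV V) (some j))).mul
    (isWeightedHomogeneous_X K (wV V) (none : Option V))
  have h2 : wV V (some i) + wV V (some j) + wV V none = 0 := by simp [wV]
  rwa [h2] at h

/-- Predicate: all monomials of `f` have nonnegative weight. -/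
def NNp {K : Type*} [Field K] {V : Type*} (f : Amb K V) : Prop :=
  ∀ d ∈ f.support, 0 ≤ Finsupp.weight (wV V) d

lemma NNp_of_isWH {f : Amb K V} {m : ℤ} (hf : f.IsWeightedHomogeneous (wV V) m)
    (hm : 0 ≤ m) : NNp f := by
  intro d hd
  rw [hf (MvPolynomial.mem_support_iff.mp hd)]
  exact hm

lemma NNp.mul {f g : Amb K V} (hf : NNp f) (hg : NNp g) : NNp (f * g) := by
  classical
  intro d hd
  obtain ⟨d1, hd1, d2, hd2, rfl⟩ := Finset.mem_add.mp (MvPolynomial.support_mul f g hd)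
  rw [map_add]
  exact add_nonneg (hf d1 hd1) (hg d2 hd2)

lemma NNp.add {f g : Amb K V} (hf : NNp f) (hg : NNp g) : NNp (f + g) := by
  classical
  intro d hd
  rcases Finset.mem_union.mp (MvPolynomial.support_add hd) with h | h
  exacts [hf d h, hg d h]

lemma NNp_C (c : K) : NNp (MvPolynomial.C c : Amb K V) :=
  NNp_of_isWH (isWeightedHomogeneous_C _ _) le_rfl

lemma NNp_of_mem_RG {f : Amb K V} (hf : f ∈ RG K G) : NNp f := by
  have hf' : f ∈ Algebra.adjoin K
      ({tGen K} ∪ Set.range (vGen K (V := V)) ∪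
        {p | ∃ i j, G.Adj i j ∧ p = eGen K i j}) := hf
  clear hf
  induction hf' using Algebra.adjoin_induction with
  | mem x hx =>
      rcases hx with (hx | ⟨i, rfl⟩) | ⟨i, j, _, rfl⟩
      · rw [Set.mem_singleton_iff] at hx
        subst hx
        exact NNp_of_isWH isWH_tGen (by norm_num)
      · exact NNp_of_isWH (isWH_vGen i) (by norm_num)
      · exact NNp_of_isWH (isWH_eGen i j) le_rfl
  | algebraMap c => exact NNp_C c
  | add x y _ _ hx hy => exact hx.add hy
  | mul x y _ _ hx hy => exact hx.mul hy

/-- Multiplicativity of the weight-0 component on nonnegatively weighted polynomials. -/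
lemma pi_mul {f g : Amb K V} (hf : NNp f) (hg : NNp g) :
    weightedHomogeneousComponent (wV V) 0 (f * g) =
      weightedHomogeneousComponent (wV V) 0 f * weightedHomogeneousComponent (wV V) 0 g := by
  classical
  ext d
  rw [coeff_weightedHomogeneousComponent, MvPolynomial.coeff_mul, MvPolynomial.coeff_mul]
  split_ifs with h
  · refine Finset.sum_congr rfl fun p hp => ?_
    rw [Finset.HasAntidiagonal.mem_antidiagonal] at hp
    rw [coeff_weightedHomogeneousComponent, coeff_weightedHomogeneousComponent]
    have hsum : Finsupp.weight (wV V) p.1 + Finsupp.weight (wV V) p.2 = 0 := by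
      rw [← map_add, hp, h]
    by_cases h1 : Finsupp.weight (wV V) p.1 = 0
    · rw [if_pos h1, if_pos (by omega)]
    · rw [if_neg h1]
      by_cases hc : MvPolynomial.coeff p.1 f = 0
      · rw [hc, zero_mul, zero_mul]
      · have h1p : 0 ≤ Finsupp.weight (wV V) p.1 :=
          hf _ (MvPolynomial.mem_support_iff.mpr hc)
        have h2n : ¬ (0 ≤ Finsupp.weight (wV V) p.2) := by omega
        have hc2 : MvPolynomial.coeff p.2 g = 0 := by
          by_contra h'
          exact h2n (hg _ (MvPolynomial.mem_support_iff.mpr h'))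
        rw [hc2, mul_zero, zero_mul]
  · symm
    apply Finset.sum_eq_zero
    intro p hp
    rw [Finset.HasAntidiagonal.mem_antidiagonal] at hp
    rw [coeff_weightedHomogeneousComponent, coeff_weightedHomogeneousComponent]
    by_cases h1 : Finsupp.weight (wV V) p.1 = 0
    · by_cases h2 : Finsupp.weight (wV V) p.2 = 0
      · exact absurd (by rw [← hp, map_add, h1, h2, add_zero]) h
      · rw [if_neg h2, mul_zero]
    · rw [if_neg h1, zero_mul]

lemma tGen_mem_RG : tGen K ∈ RG K G :=
  Algebra.subset_adjoin (Or.inl (Or.inl rfl))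

lemma vGen_mem_RG (i : V) : vGen K i ∈ RG K G :=
  Algebra.subset_adjoin (Or.inl (Or.inr ⟨i, rfl⟩))

lemma eGen_mem_RG {i j : V} (h : G.Adj i j) : eGen K i j ∈ RG K G :=
  Algebra.subset_adjoin (Or.inr ⟨i, j, h, rfl⟩)

/-- The weight-0 component vanishes on `P0`. -/
lemma pi_eq_zero_of_mem_P0 {u : RG K G} (hu : u ∈ P0 K G) :
    weightedHomogeneousComponent (wV V) 0 (u : Amb K V) = 0 := by
  refine Submodule.span_induction ?_ ?_ ?_ ?_ hu
  · rintro x (hx | ⟨i, hx⟩)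
    · rw [hx]
      exact isWH_tGen.weightedHomogeneousComponent_ne 0 (by norm_num)
    · rw [hx]
      exact (isWH_vGen i).weightedHomogeneousComponent_ne 0 (by norm_num)
  · rw [ZeroMemClass.coe_zero, map_zero]
  · intro x y _ _ hx hy
    rw [AddMemClass.coe_add, map_add, hx, hy, add_zero]
  · intro a x _ hx
    rw [smul_eq_mul, MulMemClass.coe_mul, pi_mul (NNp_of_mem_RG a.2) (NNp_of_mem_RG x.2),
      hx, mul_zero]

/-- Structure result: for `u ∈ R_G`, its weight-0 part lies in `R_G` and the rest in `P0`. -/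
lemma claimA (u : RG K G) :
    ∃ y : RG K G, (y : Amb K V) = weightedHomogeneousComponent (wV V) 0 (u : Amb K V) ∧
      u - y ∈ P0 K G := by
  have hspan : (u : Amb K V) ∈ Submodule.span K
      ((Submonoid.closure ({tGen K} ∪ Set.range (vGen K (V := V)) ∪
        {p | ∃ i j, G.Adj i j ∧ p = eGen K i j}) : Submonoid (Amb K V)) : Set (Amb K V)) := by
    rw [← Algebra.adjoin_eq_span]
    exact u.2
  have main : ∀ x ∈ Submodule.span K
      ((Submonoid.closure ({tGen K} ∪ Set.range (vGen K (V := V)) ∪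
        {p | ∃ i j, G.Adj i j ∧ p = eGen K i j}) : Submonoid (Amb K V)) : Set (Amb K V)),
      ∃ y : RG K G, (y : Amb K V) = weightedHomogeneousComponent (wV V) 0 x ∧
        ∀ v : RG K G, (v : Amb K V) = x → v - y ∈ P0 K G := by
    intro x hx
    refine Submodule.span_induction ?_ ?_ ?_ ?_ hx
    · intro z hz
      induction hz using Submonoid.closure_induction with
      | mem z hzmem =>
          rcases hzmem with (hz1 | ⟨i, rfl⟩) | ⟨i, j, hadj, rfl⟩
          · rw [Set.mem_singleton_iff] at hz1
            subst hz1
            refine ⟨0, ?_, ?_⟩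
            · rw [ZeroMemClass.coe_zero,
                isWH_tGen.weightedHomogeneousComponent_ne 0 (by norm_num)]
            · intro v hv
              rw [sub_zero]
              exact Ideal.subset_span (Or.inl hv)
          · refine ⟨0, ?_, ?_⟩
            · rw [ZeroMemClass.coe_zero,
                (isWH_vGen i).weightedHomogeneousComponent_ne 0 (by norm_num)]
            · intro v hv
              rw [sub_zero]
              exact Ideal.subset_span (Or.inr ⟨i, hv⟩)
          · refine ⟨⟨eGen K i j, eGen_mem_RG hadj⟩, ?_, ?_⟩
            · rw [(isWH_eGen i j).weightedHomogeneousComponent_same]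
            · intro v hv
              have hveq : v = ⟨eGen K i j, eGen_mem_RG hadj⟩ := Subtype.ext hv
              rw [hveq, sub_self]
              exact (P0 K G).zero_mem
      | one =>
          refine ⟨1, ?_, ?_⟩
          · rw [OneMemClass.coe_one,
              (isWeightedHomogeneous_one K (wV V)).weightedHomogeneousComponent_same]
          · intro v hv
            have hveq : v = 1 := Subtype.ext (by rw [hv, OneMemClass.coe_one])
            rw [hveq, sub_self]
            exact (P0 K G).zero_mem
      | mul z1 z2 hz1 hz2 ih1 ih2 =>
          obtain ⟨y1, hy1, hP1⟩ := ih1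
          obtain ⟨y2, hy2, hP2⟩ := ih2
          have hz1RG : z1 ∈ RG K G :=
            Submonoid.closure_induction (fun w hw => Algebra.subset_adjoin hw)
              (one_mem _) (fun a b _ _ ha hb => mul_mem ha hb) hz1
          have hz2RG : z2 ∈ RG K G :=
            Submonoid.closure_induction (fun w hw => Algebra.subset_adjoin hw)
              (one_mem _) (fun a b _ _ ha hb => mul_mem ha hb) hz2
          have hNN1 : NNp z1 := NNp_of_mem_RG hz1RG
          have hNN2 : NNp z2 := NNp_of_mem_RG hz2RG
          refine ⟨y1 * y2, ?_, ?_⟩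
          · rw [MulMemClass.coe_mul, hy1, hy2, pi_mul hNN1 hNN2]
          · intro v hv
            have hveq : v = (⟨z1, hz1RG⟩ : RG K G) * ⟨z2, hz2RG⟩ :=
              Subtype.ext (by rw [hv, MulMemClass.coe_mul])
            have hid : (⟨z1, hz1RG⟩ : RG K G) * ⟨z2, hz2RG⟩ - y1 * y2 =
                (⟨z1, hz1RG⟩ : RG K G) * ((⟨z2, hz2RG⟩ : RG K G) - y2) +
                ((⟨z1, hz1RG⟩ : RG K G) - y1) * y2 := by ring
            rw [hveq, hid]
            exact (P0 K G).add_mem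
              (Ideal.mul_mem_left _ _ (hP2 _ rfl))
              (Ideal.mul_mem_right _ _ (hP1 _ rfl))
    · refine ⟨0, ?_, ?_⟩
      · rw [ZeroMemClass.coe_zero, map_zero]
      · intro v hv
        have hveq : v = 0 := Subtype.ext (by rw [hv, ZeroMemClass.coe_zero])
        rw [hveq, sub_zero]
        exact (P0 K G).zero_mem
    · intro x1 x2 hx1 hx2 ih1 ih2
      obtain ⟨y1, hy1, hP1⟩ := ih1
      obtain ⟨y2, hy2, hP2⟩ := ih2
      have hx1RG : x1 ∈ RG K G := by
        rw [← Algebra.adjoin_eq_span] at hx1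
        exact hx1
      have hx2RG : x2 ∈ RG K G := by
        rw [← Algebra.adjoin_eq_span] at hx2
        exact hx2
      refine ⟨y1 + y2, ?_, ?_⟩
      · rw [AddMemClass.coe_add, hy1, hy2, map_add]
      · intro v hv
        have hveq : v = (⟨x1, hx1RG⟩ : RG K G) + ⟨x2, hx2RG⟩ :=
          Subtype.ext (by rw [hv, AddMemClass.coe_add])
        have hid : (⟨x1, hx1RG⟩ : RG K G) + ⟨x2, hx2RG⟩ - (y1 + y2) =
            ((⟨x1, hx1RG⟩ : RG K G) - y1) + ((⟨x2, hx2RG⟩ : RG K G) - y2) := by ring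
        rw [hveq, hid]
        exact (P0 K G).add_mem (hP1 _ rfl) (hP2 _ rfl)
    · intro c x hx ih
      obtain ⟨y1, hy1, hP1⟩ := ih
      have hxRG : x ∈ RG K G := by
        rw [← Algebra.adjoin_eq_span] at hx
        exact hx
      refine ⟨c • y1, ?_, ?_⟩
      · rw [Subalgebra.coe_smul, hy1, map_smul]
      · intro v hv
        have hveq : v = c • (⟨x, hxRG⟩ : RG K G) :=
          Subtype.ext (by rw [hv, Subalgebra.coe_smul])
        have hid : c • (⟨x, hxRG⟩ : RG K G) - c • y1 =
            c • ((⟨x, hxRG⟩ : RG K G) - y1) := (smul_sub c _ y1).symm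
        rw [hveq, hid, algebra_compatible_smul (RG K G) c ((⟨x, hxRG⟩ : RG K G) - y1),
          smul_eq_mul]
        exact Ideal.mul_mem_left _ _ (hP1 _ rfl)
  obtain ⟨y, hy, hP⟩ := main _ hspan
  exact ⟨y, hy, hP u rfl⟩

lemma mem_P0_of_pi_eq_zero {u : RG K G}
    (h : weightedHomogeneousComponent (wV V) 0 (u : Amb K V) = 0) : u ∈ P0 K G := by
  obtain ⟨y, hy, hP⟩ := claimA u
  have hy0 : y = 0 := Subtype.ext (by rw [hy, h, ZeroMemClass.coe_zero])
  rw [hy0, sub_zero] at hP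
  exact hP

lemma P0_isPrime : (P0 K G).IsPrime := by
  constructor
  · intro htop
    have h1 : (1 : RG K G) ∈ P0 K G := htop ▸ Submodule.mem_top
    have h2 := pi_eq_zero_of_mem_P0 h1
    rw [OneMemClass.coe_one,
      (isWeightedHomogeneous_one K (wV V)).weightedHomogeneousComponent_same] at h2
    exact one_ne_zero h2
  · intro f g hfg
    by_contra hcon
    push_neg at hcon
    obtain ⟨hf, hg⟩ := hcon
    have hf0 : weightedHomogeneousComponent (wV V) 0 (f : Amb K V) ≠ 0 :=
      fun h0 => hf (mem_P0_of_pi_eq_zero h0)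
    have hg0 : weightedHomogeneousComponent (wV V) 0 (g : Amb K V) ≠ 0 :=
      fun h0 => hg (mem_P0_of_pi_eq_zero h0)
    have h1 := pi_eq_zero_of_mem_P0 hfg
    rw [MulMemClass.coe_mul, pi_mul (NNp_of_mem_RG f.2) (NNp_of_mem_RG g.2)] at h1
    exact mul_ne_zero hf0 hg0 h1

lemma tIdeal_le_P0 : tIdeal K G ≤ P0 K G :=
  Ideal.span_le.mpr fun _ hu => Ideal.subset_span (Or.inl hu)

/-! ### The combinatorial identity -/

lemma pairProd {M : Type*} [CommSemiring M] (f : ℕ → M) (k : ℕ) :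
    ∏ l ∈ Finset.range (2*k), f (l+2) = ∏ j ∈ Finset.range k, (f (2*j+2) * f (2*j+3)) := by
  induction k with
  | zero => simp
  | succ k ih =>
      rw [Finset.prod_range_succ, ← ih, show 2*(k+1) = (2*k+1)+1 by ring,
        Finset.prod_range_succ, Finset.prod_range_succ, mul_assoc,
        show 2*k+1+2 = 2*k+3 by ring]

lemma keyIdentityAbstract {M : Type*} [CommSemiring M] (A : ℕ → M) (T : M) (m : ℕ)
    (hAw : A (2*m+3) = A 0) :
    (∏ l ∈ Finset.range (2*m+3), (A l * A (l+1) * T)) * (A 0 * T) ^ 2 =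
      T * ((A 0 * A 1 * T) ^ 2 * (A (2*m+2) * A (2*m+3) * T) ^ 2 *
        ∏ j ∈ Finset.range m, (A (2*j+2) * A (2*j+3) * T) ^ 2) := by
  have hprod : (∏ l ∈ Finset.range (2*m+3), (A l * A (l+1) * T))
      = (∏ l ∈ Finset.range (2*m+3), A l) * (∏ l ∈ Finset.range (2*m+3), A (l+1))
        * T ^ (2*m+3) := by
    rw [Finset.prod_mul_distrib, Finset.prod_mul_distrib, Finset.prod_const,
      Finset.card_range]
  have e1 : (∏ l ∈ Finset.range (2*m+3), A l)
      = (∏ l ∈ Finset.range (2*m+2), A (l+1)) * A 0 := by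
    rw [show 2*m+3 = (2*m+2)+1 by ring, Finset.prod_range_succ']
  have e2 : (∏ l ∈ Finset.range (2*m+3), A (l+1))
      = (∏ l ∈ Finset.range (2*m+2), A (l+1)) * A 0 := by
    rw [show 2*m+3 = (2*m+2)+1 by ring, Finset.prod_range_succ,
      show 2*m+2+1 = 2*m+3 by ring, hAw]
  have e3 : (∏ l ∈ Finset.range (2*m+2), A (l+1))
      = (∏ l ∈ Finset.range (2*m+1), A (l+2)) * A 1 := by
    rw [show 2*m+2 = (2*m+1)+1 by ring, Finset.prod_range_succ' (fun l => A (l+1))]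
  have e4 : (∏ l ∈ Finset.range (2*m+1), A (l+2))
      = (∏ l ∈ Finset.range (2*m), A (l+2)) * A (2*m+2) := by
    rw [show 2*m+1 = (2*m)+1 by ring, Finset.prod_range_succ, show 2*m+2 = 2*m+2 by ring]
  have e6 : (∏ j ∈ Finset.range m, (A (2*j+2) * A (2*j+3) * T) ^ 2)
      = ((∏ j ∈ Finset.range m, (A (2*j+2) * A (2*j+3))) * T ^ m) ^ 2 := by
    rw [Finset.prod_pow, Finset.prod_mul_distrib, Finset.prod_const, Finset.card_range]
  rw [hprod, e1, e2, e3, e4, pairProd A m, hAw, e6]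
  ring

lemma keyIdentity (w : ℕ → V) (m : ℕ) (hw : w (2*m+3) = w 0) :
    (∏ l ∈ Finset.range (2*m+3), eGen K (w l) (w (l+1))) * vGen K (w 0) ^ 2 =
      tGen K * (eGen K (w 0) (w 1) ^ 2 * eGen K (w (2*m+2)) (w (2*m+3)) ^ 2 *
        ∏ j ∈ Finset.range m, eGen K (w (2*j+2)) (w (2*j+3)) ^ 2) := by
  have h := keyIdentityAbstract (M := Amb K V) (fun l => X (some (w l))) (X none) m
    (by simp only [hw])
  simpa only [eGen, vGen, tGen] using h

/-! ### Odd closed walks -/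

lemma exists_oddWalk (hconn : G.Connected) (hnc : ¬ G.Colorable 2) (i : V) :
    ∃ p : G.Walk i i, Odd p.length := by
  by_contra hall
  push_neg at hall
  apply hnc
  have hreach : ∀ v, G.Reachable i v := fun v => hconn.preconnected i v
  refine ⟨SimpleGraph.Coloring.mk
    (fun v => (⟨(hreach v).some.length % 2, Nat.mod_lt _ (by norm_num)⟩ : Fin 2)) ?_⟩
  intro a b hab hcol
  simp only [Fin.mk.injEq] at hcol
  set q : G.Walk i i :=
    ((hreach a).some).append (SimpleGraph.Walk.cons hab ((hreach b).some.reverse)) with hq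
  have hlen : q.length = (hreach a).some.length + ((hreach b).some.length + 1) := by
    rw [hq, SimpleGraph.Walk.length_append, SimpleGraph.Walk.length_cons,
      SimpleGraph.Walk.length_reverse]
  have hodd := hall q
  rw [Nat.odd_iff] at hodd
  omega

/-! ### Key step: every generator `x_i t` lies in any prime between `(t)` and `P0` -/

lemma vE_mem_Q (hconn : G.Connected) (hnc : ¬ G.Colorable 2)
    {Q : Ideal (RG K G)} (hQp : Q.IsPrime) (hQt : tIdeal K G ≤ Q) (hQ0 : Q ≤ P0 K G)
    (i : V) : (⟨vGen K i, vGen_mem_RG i⟩ : RG K G) ∈ Q := by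
  obtain ⟨p, hodd⟩ := exists_oddWalk hconn hnc i
  obtain ⟨k, hk⟩ := hodd
  have hne1 : p.length ≠ 1 := by
    intro h1
    have hadj := p.adj_getVert_succ (i := 0) (by omega)
    rw [SimpleGraph.Walk.getVert_zero] at hadj
    have h2 : p.getVert 1 = i := by
      have h3 := SimpleGraph.Walk.getVert_length p
      rwa [h1] at h3
    rw [show (0+1 : ℕ) = 1 from rfl, h2] at hadj
    exact G.loopless.irrefl i hadj
  have hlen : p.length = 2*(k-1)+3 := by omega
  set m : ℕ := k - 1 with hm
  set w : ℕ → V := fun l => p.getVert l with hwdef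
  have hw0 : w 0 = i := SimpleGraph.Walk.getVert_zero p
  have hwL : w (2*m+3) = w 0 := by
    rw [hw0, hwdef]
    simp only
    rw [← hlen]
    exact SimpleGraph.Walk.getVert_length p
  have hadj : ∀ l, l < 2*m+3 → G.Adj (w l) (w (l+1)) := fun l hl =>
    p.adj_getVert_succ (by omega)
  have hsRG : (∏ l ∈ Finset.range (2*m+3), eGen K (w l) (w (l+1))) ∈ RG K G :=
    Subalgebra.prod_mem _ fun l hl => eGen_mem_RG (hadj l (Finset.mem_range.mp hl))
  have hgRG : (eGen K (w 0) (w 1) ^ 2 * eGen K (w (2*m+2)) (w (2*m+3)) ^ 2 *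
      ∏ j ∈ Finset.range m, eGen K (w (2*j+2)) (w (2*j+3)) ^ 2) ∈ RG K G :=
    mul_mem (mul_mem (pow_mem (eGen_mem_RG (hadj 0 (by omega))) 2)
      (pow_mem (eGen_mem_RG (hadj (2*m+2) (by omega))) 2))
      (Subalgebra.prod_mem _ fun j hj => pow_mem
        (eGen_mem_RG (hadj (2*j+2) (by have := Finset.mem_range.mp hj; omega))) 2)
  have key : (∏ l ∈ Finset.range (2*m+3), eGen K (w l) (w (l+1))) * vGen K i ^ 2 =
      tGen K * (eGen K (w 0) (w 1) ^ 2 * eGen K (w (2*m+2)) (w (2*m+3)) ^ 2 *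
        ∏ j ∈ Finset.range m, eGen K (w (2*j+2)) (w (2*j+3)) ^ 2) := by
    rw [← hw0]
    exact keyIdentity w m hwL
  have keyE : (⟨_, hsRG⟩ : RG K G) * (⟨vGen K i, vGen_mem_RG i⟩ : RG K G) ^ 2 =
      (⟨tGen K, tGen_mem_RG⟩ : RG K G) * ⟨_, hgRG⟩ := by
    apply Subtype.ext
    simp only [MulMemClass.coe_mul, SubmonoidClass.coe_pow]
    exact key
  have htEQ : (⟨tGen K, tGen_mem_RG⟩ : RG K G) ∈ Q := hQt (Ideal.subset_span rfl)
  have hprodQ : (⟨_, hsRG⟩ : RG K G) * (⟨vGen K i, vGen_mem_RG i⟩ : RG K G) ^ 2 ∈ Q := by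
    rw [keyE]
    exact Ideal.mul_mem_right _ _ htEQ
  rcases hQp.mem_or_mem hprodQ with hsQ | hvQ
  · exfalso
    have hsP0 : (⟨_, hsRG⟩ : RG K G) ∈ P0 K G := hQ0 hsQ
    have hpi := pi_eq_zero_of_mem_P0 hsP0
    have hWH : (∏ l ∈ Finset.range (2*m+3), eGen K (w l) (w (l+1))).IsWeightedHomogeneous
        (wV V) 0 := by
      have h := IsWeightedHomogeneous.prod (Finset.range (2*m+3))
        (fun l => eGen K (w l) (w (l+1))) (fun _ => (0:ℤ))
        (fun l _ => isWH_eGen (w l) (w (l+1)))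
      simpa using h
    rw [show ((⟨_, hsRG⟩ : RG K G) : Amb K V) =
        (∏ l ∈ Finset.range (2*m+3), eGen K (w l) (w (l+1))) from rfl,
      hWH.weightedHomogeneousComponent_same] at hpi
    have hsne : (∏ l ∈ Finset.range (2*m+3), eGen K (w l) (w (l+1))) ≠ 0 := by
      refine Finset.prod_ne_zero_iff.mpr fun l _ => ?_
      simp only [eGen]
      exact mul_ne_zero (mul_ne_zero (MvPolynomial.X_ne_zero _)
        (MvPolynomial.X_ne_zero _)) (MvPolynomial.X_ne_zero _)
    exact hsne hpi
  · exact hQp.mem_of_pow_mem 2 hvQ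

end Aux

/-- If `G` is connected and `P₀ = (t, x₁t, …, xₙt)` is not a minimal
prime of the principal ideal `(t)` of `R_G`, then `G` is bipartite. -/
theorem stmt5 (K : Type*) [Field K] {n : ℕ} (G : SimpleGraph (Fin n))
    (hconn : G.Connected)
    (h : P0 K G ∉ (tIdeal K G).minimalPrimes) :
    G.Colorable 2 := by
  by_contra hnc
  apply h
  constructor
  · exact ⟨P0_isPrime, tIdeal_le_P0⟩
  · rintro Q ⟨hQp, hQt⟩ hQle
    refine Ideal.span_le.mpr ?_
    rintro u (hu | ⟨i, hu⟩)
    · have heq : u = ⟨tGen K, tGen_mem_RG⟩ := Subtype.ext hu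
      rw [heq]
      exact hQt (Ideal.subset_span rfl)
    · have heq : u = ⟨vGen K i, vGen_mem_RG i⟩ := Subtype.ext hu
      rw [heq]
      exact vE_mem_Q hconn hnc hQp hQt hQle i
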